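/- Suppose that for some i ∈ I the adjoint L_i* : G_i → H is surjective and there exists a continuous convex function g_i : G_i → ℝ such that F_i is the proximity operator of g_i, i.e., for every y ∈ G_i, F_i y is the unique minimizer over G_i of the function z ↦ g_i(z) + ‖y − z‖²/2. Then the relaxed problem has a solution: there exists x ∈ C such that Σ_{j∈I} ω_j ⟪L_j(y − x), F_j(L_j x) − p_j⟫ ≥ 0 for every y ∈ C. -/

import Mathlib

open RealInnerProductSpace Pointwise

set_option maxHeartbeats 1000000

lemma exists_proj {H : Type*} [NormedAddCommGroup H] [InnerProductSpace ℝ H] [CompleteSpace H]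
    (C : Set H) (hCne : C.Nonempty) (hCcl : IsClosed C) (hCcv : Convex ℝ C) (x : H) :
    ∃ q ∈ C, ∀ y ∈ C, ⟪x - q, y - q⟫ ≤ 0 := by
  obtain ⟨q, hqC, hq⟩ := exists_norm_eq_iInf_of_complete_convex hCne hCcl.isComplete hCcv x
  exact ⟨q, hqC, fun y hy => ((norm_eq_iInf_iff_real_inner_le_zero hCcv hqC).1 hq) y hy⟩

/-- Existence of solutions of strongly monotone variational inequalities. -/
lemma exists_vi_strong {H : Type*} [NormedAddCommGroup H] [InnerProductSpace ℝ H]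
    [CompleteSpace H]
    (C : Set H) (hCne : C.Nonempty) (hCcl : IsClosed C) (hCcv : Convex ℝ C)
    (B : H → H) (m ℓ : ℝ) (hm : 0 < m)
    (hmono : ∀ x y, ⟪B x - B y, x - y⟫ ≥ m * ‖x - y‖ ^ 2)
    (hlip : ∀ x y, ‖B x - B y‖ ≤ ℓ * ‖x - y‖) :
    ∃ x ∈ C, ∀ y ∈ C, 0 ≤ ⟪B x, y - x⟫ := by
  classical
  choose P hPmem hPchar using fun x => exists_proj C hCne hCcl hCcv x
  have hPnonexp : ∀ x y, ‖P x - P y‖ ≤ ‖x - y‖ := by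
    intro x y
    have h1 : ⟪x - P x, P y - P x⟫ ≤ 0 := hPchar x (P y) (hPmem y)
    have h2 : ⟪y - P y, P x - P y⟫ ≤ 0 := hPchar y (P x) (hPmem x)
    have key : ‖P x - P y‖ ^ 2 ≤ ⟪x - y, P x - P y⟫ := by
      have e1 : ⟪x - P x, P x - P y⟫ ≥ 0 := by
        have : P y - P x = -(P x - P y) := by abel
        rw [this, inner_neg_right] at h1; linarith
      have expand : ⟪x - y, P x - P y⟫
          = ⟪x - P x, P x - P y⟫ - ⟪y - P y, P x - P y⟫ + ⟪P x - P y, P x - P y⟫ := by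
        rw [← inner_sub_left, ← inner_add_left]
        congr 1
        abel
      rw [expand, real_inner_self_eq_norm_sq]
      linarith
    have hcs : ⟪x - y, P x - P y⟫ ≤ ‖x - y‖ * ‖P x - P y‖ := real_inner_le_norm _ _
    rcases eq_or_lt_of_le (norm_nonneg (P x - P y)) with h0 | h0
    · rw [← h0]; exact norm_nonneg _
    · nlinarith [norm_nonneg (x - y)]
  set ℓ' : ℝ := max ℓ m with hℓ'
  have hℓ'pos : 0 < ℓ' := lt_of_lt_of_le hm (le_max_right _ _)
  have hmℓ' : m ≤ ℓ' := le_max_right _ _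
  have hlip' : ∀ x y, ‖B x - B y‖ ≤ ℓ' * ‖x - y‖ := fun x y =>
    (hlip x y).trans (by
      have := norm_nonneg (x - y)
      exact mul_le_mul_of_nonneg_right (le_max_left _ _) this)
  set γ : ℝ := m / ℓ' ^ 2 with hγ
  have hγpos : 0 < γ := div_pos hm (by positivity)
  set r : ℝ := Real.sqrt (1 - (m / ℓ') ^ 2) with hr
  have hmdiv : 0 < m / ℓ' := div_pos hm hℓ'pos
  have hmdiv1 : m / ℓ' ≤ 1 := (div_le_one hℓ'pos).2 hmℓ'
  have harg : 0 ≤ 1 - (m / ℓ') ^ 2 := by nlinarith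
  have hr2 : r ^ 2 = 1 - (m / ℓ') ^ 2 := Real.sq_sqrt harg
  have hrnn : 0 ≤ r := Real.sqrt_nonneg _
  have hrlt : r < 1 := by nlinarith
  set T : H → H := fun x => P (x - γ • B x) with hT
  have hTlip : ∀ x y, ‖T x - T y‖ ≤ r * ‖x - y‖ := by
    intro x y
    have h1 : ‖T x - T y‖ ≤ ‖(x - γ • B x) - (y - γ • B y)‖ := hPnonexp _ _
    have e : (x - γ • B x) - (y - γ • B y) = (x - y) - γ • (B x - B y) := by
      rw [smul_sub]; abel
    have h2 : ‖(x - y) - γ • (B x - B y)‖ ^ 2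
        = ‖x - y‖ ^ 2 - 2 * γ * ⟪B x - B y, x - y⟫ + γ ^ 2 * ‖B x - B y‖ ^ 2 := by
      rw [norm_sub_sq_real, inner_smul_right, norm_smul, real_inner_comm]
      rw [mul_pow]
      simp [abs_of_pos hγpos]
      ring
    have h3 : ‖(x - y) - γ • (B x - B y)‖ ^ 2 ≤ r ^ 2 * ‖x - y‖ ^ 2 := by
      rw [h2, hr2]
      have hmono' := hmono x y
      have hlip'' := hlip' x y
      have hBnn : 0 ≤ ‖B x - B y‖ := norm_nonneg _
      have hxy : 0 ≤ ‖x - y‖ := norm_nonneg _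
      have hsq : ‖B x - B y‖ ^ 2 ≤ (ℓ' * ‖x - y‖) ^ 2 := by nlinarith
      have hγℓ : γ ^ 2 * (ℓ' * ‖x - y‖) ^ 2 = (m / ℓ') ^ 2 * ‖x - y‖ ^ 2 := by
        rw [hγ]; field_simp
      have f1 : 2 * γ * (m * ‖x - y‖ ^ 2) ≤ 2 * γ * ⟪B x - B y, x - y⟫ :=
        mul_le_mul_of_nonneg_left hmono' (by positivity)
      have f2 : γ ^ 2 * ‖B x - B y‖ ^ 2 ≤ γ ^ 2 * (ℓ' * ‖x - y‖) ^ 2 :=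
        mul_le_mul_of_nonneg_left hsq (sq_nonneg γ)
      have f3 : 2 * γ * (m * ‖x - y‖ ^ 2) = 2 * ((m / ℓ') ^ 2 * ‖x - y‖ ^ 2) := by
        rw [hγ]; field_simp
      linarith
    rw [e] at h1
    have : ‖(x - y) - γ • (B x - B y)‖ ≤ r * ‖x - y‖ := by
      nlinarith [norm_nonneg ((x - y) - γ • (B x - B y)), norm_nonneg (x - y),
        mul_nonneg hrnn (norm_nonneg (x - y))]
    linarith
  have hcontr : ContractingWith r.toNNReal T := by
    constructor
    · rw [← NNReal.coe_lt_coe, Real.coe_toNNReal r hrnn]; exact_mod_cast hrlt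
    · apply LipschitzWith.of_dist_le_mul
      intro x y
      rw [dist_eq_norm, dist_eq_norm, Real.coe_toNNReal r hrnn]
      exact hTlip x y
  obtain ⟨x₀, hx₀⟩ := hCne
  obtain ⟨x, hfix, -⟩ := hcontr.exists_fixedPoint x₀ (edist_ne_top _ _)
  have hxT : T x = x := hfix
  have hxC : x ∈ C := by rw [← hxT]; exact hPmem _
  refine ⟨x, hxC, fun y hy => ?_⟩
  have hchar := hPchar (x - γ • B x) y hy
  rw [show P (x - γ • B x) = x from hxT] at hchar
  have : ⟪x - γ • B x - x, y - x⟫ = -γ * ⟪B x, y - x⟫ := by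
    have : x - γ • B x - x = -(γ • B x) := by abel
    rw [this, inner_neg_left, real_inner_smul_left]; ring
  rw [this] at hchar
  nlinarith

/-- Existence of subgradients for continuous convex real functions on a Hilbert space. -/
lemma exists_subgradient {E : Type*} [NormedAddCommGroup E] [InnerProductSpace ℝ E]
    [CompleteSpace E]
    (g : E → ℝ) (hgc : Continuous g) (hgcv : ConvexOn ℝ Set.univ g) (w : E) :
    ∃ ξ : E, ∀ z, g w + ⟪ξ, z - w⟫ ≤ g z := by
  classical
  set s : Set (E × ℝ) := {q | g q.1 < q.2} with hs
  have hsopen : IsOpen s := isOpen_lt (hgc.comp continuous_fst) continuous_snd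
  have hsconv : Convex ℝ s := by
    intro q hq q' hq' a b ha hb hab
    simp only [hs, Set.mem_setOf_eq] at hq hq' ⊢
    have h1 : g (a • q.1 + b • q'.1) ≤ a * g q.1 + b * g q'.1 :=
      hgcv.2 (Set.mem_univ _) (Set.mem_univ _) ha hb hab
    have h2 : a * g q.1 + b * g q'.1 < a * q.2 + b * q'.2 := by
      rcases lt_or_ge 0 a with hapos | ha0
      · have : b * g q'.1 ≤ b * q'.2 := mul_le_mul_of_nonneg_left (le_of_lt hq') hb
        nlinarith
      · have ha' : a = 0 := le_antisymm ha0 ha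
        have hb' : b = 1 := by linarith
        simp [ha', hb', hq']
    calc g ((a • q + b • q').1) = g (a • q.1 + b • q'.1) := by simp
    _ ≤ a * g q.1 + b * g q'.1 := h1
    _ < a * q.2 + b * q'.2 := h2
    _ = (a • q + b • q').2 := by simp
  have hnot : ((w, g w) : E × ℝ) ∉ s := by simp [hs]
  obtain ⟨f, hf⟩ := geometric_hahn_banach_point_open hsconv hsopen hnot
  set c : ℝ := f (0, 1) with hc
  have hsplit : ∀ z t, f (z, t) = f (z, 0) + t * c := by
    intro z t
    have : ((z, t) : E × ℝ) = (z, 0) + t • ((0 : E), (1 : ℝ)) := by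
      simp [Prod.ext_iff]
    rw [this, map_add, map_smul]
    simp [hc, smul_eq_mul]
  have hcpos : 0 < c := by
    have := hf (w, g w + 1) (by simp [hs])
    rw [hsplit w (g w), hsplit w (g w + 1)] at this
    nlinarith
  have key : ∀ z, f (w, 0) + g w * c ≤ f (z, 0) + g z * c := by
    intro z
    have h : ∀ τ : ℝ, 0 < τ → f (w, 0) + g w * c < f (z, 0) + g z * c + τ := by
      intro τ hτ
      have := hf (z, g z + τ / c) (by simp [hs]; positivity)
      rw [hsplit w (g w), hsplit z (g z + τ / c)] at this
      have : f (w, 0) + g w * c < f (z, 0) + g z * c + (τ / c) * c := by linarith [this]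
      rwa [div_mul_cancel₀ τ (ne_of_gt hcpos)] at this
    exact le_of_forall_pos_lt_add (fun ε hε => h ε hε)
  set φ : E →L[ℝ] ℝ := f.comp (ContinuousLinearMap.inl ℝ E ℝ) with hφ
  have hφval : ∀ z, φ z = f (z, 0) := fun z => rfl
  set ξ : E := (InnerProductSpace.toDual ℝ E).symm ((-c⁻¹) • φ) with hξ
  have hξval : ∀ z, ⟪ξ, z⟫ = -c⁻¹ * f (z, 0) := by
    intro z
    rw [hξ, InnerProductSpace.toDual_symm_apply]
    simp [hφval]
  refine ⟨ξ, fun z => ?_⟩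
  have h1 : ⟪ξ, z - w⟫ = -c⁻¹ * f (z - w, 0) := hξval _
  have h2 : f (z - w, 0) = f (z, 0) - f (w, 0) := by
    have : ((z - w, 0) : E × ℝ) = (z, 0) - (w, 0) := by simp [Prod.ext_iff]
    rw [this, map_sub]
  have h3 := key z
  rw [h1, h2]
  have hcinv : 0 < c⁻¹ := inv_pos.2 hcpos
  have h4 : (f (w, 0) - f (z, 0)) ≤ (g z - g w) * c := by linarith
  have h5 : -c⁻¹ * (f (z, 0) - f (w, 0)) = c⁻¹ * (f (w, 0) - f (z, 0)) := by ring
  have h6 : c⁻¹ * (f (w, 0) - f (z, 0)) ≤ c⁻¹ * ((g z - g w) * c) :=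
    mul_le_mul_of_nonneg_left h4 (le_of_lt hcinv)
  have h7 : c⁻¹ * ((g z - g w) * c) = g z - g w := by field_simp
  linarith

/-- If for some `i`, `Lᵢ*` is surjective and `Fᵢ` is the proximity operator of a
continuous convex real-valued function, the relaxed variational inequality problem has a
solution. -/
theorem relaxed_has_solution_of_prox
    {H : Type*} [NormedAddCommGroup H] [InnerProductSpace ℝ H] [CompleteSpace H]
    {I : Type*} [Fintype I] [Nonempty I]
    (G : I → Type*) [∀ i, NormedAddCommGroup (G i)] [∀ i, InnerProductSpace ℝ (G i)]
    [∀ i, CompleteSpace (G i)]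
    (ω : I → ℝ) (hω : ∀ i, ω i ∈ Set.Ioo (0 : ℝ) 1) (hωsum : ∑ i, ω i = 1)
    (C : Set H) (hCne : C.Nonempty) (hCcl : IsClosed C) (hCcv : Convex ℝ C)
    (p : ∀ i, G i) (L : ∀ i, H →L[ℝ] G i) (hL : ∀ i, L i ≠ 0)
    (F : ∀ i, G i → G i)
    (hF : ∀ i, ∀ u v : G i, ⟪u - v, F i u - F i v⟫ ≥ ‖F i u - F i v‖ ^ 2)
    (i : I) (hadj : Function.Surjective (ContinuousLinearMap.adjoint (L i)))
    (g : G i → ℝ) (hgc : Continuous g) (hgcv : ConvexOn ℝ Set.univ g)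
    (hprox : ∀ y z : G i, z ≠ F i y →
      g (F i y) + ‖y - F i y‖ ^ 2 / 2 < g z + ‖y - z‖ ^ 2 / 2) :
    ∃ x ∈ C, ∀ y ∈ C, (∑ i, ω i * ⟪L i (y - x), F i (L i x) - p i⟫) ≥ 0 := by
  classical
  obtain ⟨x₀, hx₀C⟩ := hCne
  have hωpos : ∀ j, 0 < ω j := fun j => (hω j).1
  -- basic facts about the firmly nonexpansive maps
  have hFmono : ∀ j (u v : G j), 0 ≤ ⟪F j u - F j v, u - v⟫ := by
    intro j u v
    have h := hF j u v
    rw [real_inner_comm]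
    nlinarith [sq_nonneg ‖F j u - F j v‖]
  have hFnonexp : ∀ j (u v : G j), ‖F j u - F j v‖ ≤ ‖u - v‖ := by
    intro j u v
    have h := hF j u v
    have hcs : ⟪u - v, F j u - F j v⟫ ≤ ‖u - v‖ * ‖F j u - F j v‖ := real_inner_le_norm _ _
    rcases eq_or_lt_of_le (norm_nonneg (F j u - F j v)) with h0 | h0
    · rw [← h0]; exact norm_nonneg _
    · nlinarith [norm_nonneg (u - v)]
  -- the monotone operator B
  set B : H → H :=
    fun x => ∑ j, ω j • (ContinuousLinearMap.adjoint (L j)) (F j (L j x) - p j) with hB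
  have hBinner : ∀ x y : H, ⟪B x, y⟫ = ∑ j, ω j * ⟪F j (L j x) - p j, L j y⟫ := by
    intro x y
    rw [hB]
    rw [sum_inner]
    refine Finset.sum_congr rfl (fun j _ => ?_)
    rw [real_inner_smul_left, ContinuousLinearMap.adjoint_inner_left]
  have hgoal : ∀ x y : H,
      (∑ j, ω j * ⟪L j (y - x), F j (L j x) - p j⟫) = ⟪B x, y - x⟫ := by
    intro x y
    rw [hBinner]
    exact Finset.sum_congr rfl (fun j _ => by rw [real_inner_comm])
  -- monotonicity of B
  have hBmono : ∀ x y : H, 0 ≤ ⟪B x - B y, x - y⟫ := by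
    intro x y
    rw [inner_sub_left, hBinner, hBinner, ← Finset.sum_sub_distrib]
    apply Finset.sum_nonneg
    intro j _
    rw [← mul_sub, ← inner_sub_left]
    have he : F j (L j x) - p j - (F j (L j y) - p j) = F j (L j x) - F j (L j y) := by abel
    rw [he]
    have := hFmono j (L j x) (L j y)
    rw [show L j x - L j y = L j (x - y) from (map_sub (L j) x y).symm] at this
    exact mul_nonneg (le_of_lt (hωpos j)) this
  -- Lipschitz constant of B
  set κ : ℝ := ∑ j, ω j * ‖L j‖ ^ 2 with hκ
  have hκnn : 0 ≤ κ := Finset.sum_nonneg fun j _ =>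
    mul_nonneg (le_of_lt (hωpos j)) (sq_nonneg _)
  have hBlip : ∀ x y : H, ‖B x - B y‖ ≤ κ * ‖x - y‖ := by
    intro x y
    have he : B x - B y
        = ∑ j, ω j • (ContinuousLinearMap.adjoint (L j)) (F j (L j x) - F j (L j y)) := by
      rw [hB, ← Finset.sum_sub_distrib]
      refine Finset.sum_congr rfl (fun j _ => ?_)
      rw [← smul_sub, ← map_sub]
      congr 2
      abel
    rw [he, hκ, Finset.sum_mul]
    refine (norm_sum_le _ _).trans (Finset.sum_le_sum fun j _ => ?_)
    rw [norm_smul, Real.norm_eq_abs, abs_of_pos (hωpos j)]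
    have h1 : ‖(ContinuousLinearMap.adjoint (L j)) (F j (L j x) - F j (L j y))‖
        ≤ ‖L j‖ * ‖F j (L j x) - F j (L j y)‖ := by
      have := (ContinuousLinearMap.adjoint (L j)).le_opNorm (F j (L j x) - F j (L j y))
      rwa [ContinuousLinearMap.adjoint.norm_map (L j)] at this
    have h2 : ‖F j (L j x) - F j (L j y)‖ ≤ ‖L j (x - y)‖ := by
      have := hFnonexp j (L j x) (L j y)
      rwa [show L j x - L j y = L j (x - y) from (map_sub (L j) x y).symm] at this
    have h3 : ‖L j (x - y)‖ ≤ ‖L j‖ * ‖x - y‖ := (L j).le_opNorm _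
    have hLnn : (0:ℝ) ≤ ‖L j‖ := norm_nonneg _
    have hωj := le_of_lt (hωpos j)
    calc ω j * ‖(ContinuousLinearMap.adjoint (L j)) (F j (L j x) - F j (L j y))‖
        ≤ ω j * (‖L j‖ * (‖L j‖ * ‖x - y‖)) := by
          apply mul_le_mul_of_nonneg_left _ hωj
          exact h1.trans (mul_le_mul_of_nonneg_left (h2.trans h3) hLnn)
      _ = ω j * ‖L j‖ ^ 2 * ‖x - y‖ := by ring
  -- solutions of the regularized variational inequalities
  have hexists : ∀ n : ℕ, ∃ x ∈ C, ∀ y ∈ C,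
      0 ≤ ⟪B x, y - x⟫ + (1 / (n + 1 : ℝ)) * ⟪x, y - x⟫ := by
    intro n
    set ε : ℝ := 1 / (n + 1 : ℝ) with hε
    have hεpos : 0 < ε := by positivity
    have hε1 : ε ≤ 1 := by
      rw [hε, div_le_one (by positivity)]
      linarith [Nat.cast_nonneg (α := ℝ) n]
    have hmono : ∀ a b : H, ⟪(B a + ε • a) - (B b + ε • b), a - b⟫ ≥ ε * ‖a - b‖ ^ 2 := by
      intro a b
      have he : B a + ε • a - (B b + ε • b) = (B a - B b) + ε • (a - b) := by
        rw [smul_sub]; abel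
      rw [he, inner_add_left, real_inner_smul_left, real_inner_self_eq_norm_sq]
      have := hBmono a b
      linarith
    have hlip : ∀ a b : H, ‖(B a + ε • a) - (B b + ε • b)‖ ≤ (κ + 1) * ‖a - b‖ := by
      intro a b
      have he : B a + ε • a - (B b + ε • b) = (B a - B b) + ε • (a - b) := by
        rw [smul_sub]; abel
      rw [he]
      refine (norm_add_le _ _).trans ?_
      rw [norm_smul, Real.norm_eq_abs, abs_of_pos hεpos]
      have h1 := hBlip a b
      have h2 : ε * ‖a - b‖ ≤ 1 * ‖a - b‖ :=
        mul_le_mul_of_nonneg_right hε1 (norm_nonneg _)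
      nlinarith [norm_nonneg (a - b)]
    obtain ⟨x, hxC, hx⟩ := exists_vi_strong C ⟨x₀, hx₀C⟩ hCcl hCcv
      (fun z => B z + ε • z) ε (κ + 1) hεpos hmono hlip
    refine ⟨x, hxC, fun y hy => ?_⟩
    have h := hx y hy
    rw [inner_add_left, real_inner_smul_left] at h
    linarith
  choose xs hxsC hxsVI using hexists
  -- surjectivity of the proximity operator `F i`
  have hFisurj : ∀ w : G i, ∃ v : G i, F i v = w := by
    intro w
    obtain ⟨ξ, hξ⟩ := exists_subgradient g hgc hgcv w
    refine ⟨w + ξ, ?_⟩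
    by_contra hne
    have h1 := hprox (w + ξ) w (fun hc => hne hc.symm)
    have h2 := hξ (F i (w + ξ))
    have e1 : w + ξ - w = ξ := by abel
    have e2 : ‖w + ξ - F i (w + ξ)‖ ^ 2
        = ‖ξ‖ ^ 2 + 2 * ⟪ξ, w - F i (w + ξ)⟫ + ‖w - F i (w + ξ)‖ ^ 2 := by
      have e : w + ξ - F i (w + ξ) = ξ + (w - F i (w + ξ)) := by abel
      rw [e, norm_add_sq_real]
    have e3 : ⟪ξ, F i (w + ξ) - w⟫ = -⟪ξ, w - F i (w + ξ)⟫ := by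
      rw [show F i (w + ξ) - w = -(w - F i (w + ξ)) from by abel, inner_neg_right]
    rw [e1] at h1
    rw [e3] at h2
    nlinarith [sq_nonneg ‖w - F i (w + ξ)‖]
  -- the potential function of `F i`
  set hfun : G i → ℝ := fun u => ⟪u, F i u⟫ - ‖F i u‖ ^ 2 / 2 - g (F i u) with hhfun
  -- subgradient inequality for the potential
  have lemA : ∀ u u' : G i, hfun u + ⟪F i u, u' - u⟫ ≤ hfun u' := by
    intro u u'
    have emin : g (F i u') + ‖u' - F i u'‖ ^ 2 / 2 ≤ g (F i u) + ‖u' - F i u‖ ^ 2 / 2 := by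
      by_cases he : F i u = F i u'
      · rw [he]
      · exact le_of_lt (hprox u' (F i u) he)
    have x1 : ‖u' - F i u‖ ^ 2 = ‖u'‖ ^ 2 - 2 * ⟪u', F i u⟫ + ‖F i u‖ ^ 2 :=
      norm_sub_sq_real u' (F i u)
    have x2 : ‖u' - F i u'‖ ^ 2 = ‖u'‖ ^ 2 - 2 * ⟪u', F i u'⟫ + ‖F i u'‖ ^ 2 :=
      norm_sub_sq_real u' (F i u')
    have x3 : ⟪F i u, u' - u⟫ = ⟪F i u, u'⟫ - ⟪F i u, u⟫ := inner_sub_right _ _ _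
    have x4 : ⟪u, F i u⟫ = ⟪F i u, u⟫ := real_inner_comm _ _
    have x5 : ⟪u', F i u⟫ = ⟪F i u, u'⟫ := real_inner_comm _ _
    rw [hhfun]
    simp only []
    rw [x3, x4]
    linarith
  -- `L i` is bounded below
  obtain ⟨Cc, hCcpos, hCcbound⟩ :=
    ContinuousLinearMap.exists_preimage_norm_le (ContinuousLinearMap.adjoint (L i)) hadj
  have hα : ∀ z : H, Cc⁻¹ * ‖z‖ ≤ ‖L i z‖ := by
    intro z
    obtain ⟨wz, hwz, hwznorm⟩ := hCcbound z
    have h1 : ‖z‖ ^ 2 = ⟪L i z, wz⟫ := by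
      rw [← ContinuousLinearMap.adjoint_inner_right, hwz, real_inner_self_eq_norm_sq]
    have h2 : ⟪L i z, wz⟫ ≤ ‖L i z‖ * ‖wz‖ := real_inner_le_norm _ _
    have h3 : ‖L i z‖ * ‖wz‖ ≤ ‖L i z‖ * (Cc * ‖z‖) :=
      mul_le_mul_of_nonneg_left hwznorm (norm_nonneg _)
    rcases eq_or_lt_of_le (norm_nonneg z) with h0 | h0
    · rw [← h0, mul_zero]
      exact norm_nonneg _
    · rw [inv_mul_le_iff₀ hCcpos, mul_comm Cc ‖L i z‖]
      nlinarith
  -- the reference direction and associated vector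
  set vvec : H := ∑ j ∈ Finset.univ.erase i,
      ω j • (ContinuousLinearMap.adjoint (L j)) (F j (L j x₀) - p j) with hvvec
  set v : H := (-(ω i)⁻¹) • vvec with hv
  obtain ⟨wv, hwv⟩ := hadj v
  set q : G i := p i + wv with hq
  -- local boundedness of `g` near `q`
  obtain ⟨δ₀, hδ₀pos, hδ₀⟩ := Metric.continuousAt_iff.1 hgc.continuousAt 1 one_pos
  set δ : ℝ := δ₀ / 2 with hδ
  have hδpos : 0 < δ := by positivity
  have hgq : ∀ z : G i, ‖z - q‖ ≤ δ → g z ≤ g q + 1 := by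
    intro z hz
    have : dist z q < δ₀ := by
      rw [dist_eq_norm]
      linarith
    have := hδ₀ this
    rw [Real.dist_eq] at this
    have := abs_lt.1 this
    linarith [this.2]
  -- linear growth of the shifted potential
  set c₁ : ℝ := (‖q‖ + δ) ^ 2 / 2 + g q + 1 with hc₁
  have growth : ∀ u : G i, δ * ‖u‖ - c₁ ≤ hfun u - ⟪q, u⟫ := by
    intro u
    by_cases hu : u = 0
    · obtain ⟨v0, hv0⟩ := hFisurj q
      have h1 := lemA v0 0
      rw [hv0] at h1
      have e1 : hfun v0 = ⟪v0, q⟫ - ‖q‖ ^ 2 / 2 - g q := by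
        rw [hhfun]; simp only []; rw [hv0]
      have e2 : ⟪q, (0 : G i) - v0⟫ = -⟪q, v0⟫ := by
        rw [zero_sub, inner_neg_right]
      rw [e1, e2, real_inner_comm v0 q] at h1
      have : -(‖q‖ ^ 2 / 2) - g q ≤ hfun 0 := by linarith
      rw [hu]
      simp only [norm_zero, inner_zero_right, mul_zero]
      have hq2 : ‖q‖ ^ 2 ≤ (‖q‖ + δ) ^ 2 := by nlinarith [norm_nonneg q]
      rw [hc₁]
      linarith
    · have hnu : 0 < ‖u‖ := norm_pos_iff.2 hu
      set w : G i := q + (δ / ‖u‖) • u with hw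
      have hwq : ‖w - q‖ = δ := by
        rw [hw]
        simp only [add_sub_cancel_left]
        rw [norm_smul, Real.norm_eq_abs, abs_of_pos (by positivity : (0:ℝ) < δ / ‖u‖)]
        field_simp
      have hgw : g w ≤ g q + 1 := hgq w (le_of_eq hwq)
      have hwnorm : ‖w‖ ≤ ‖q‖ + δ := by
        calc ‖w‖ = ‖q + (w - q)‖ := by rw [show q + (w - q) = w from by abel]
          _ ≤ ‖q‖ + ‖w - q‖ := norm_add_le _ _
          _ = ‖q‖ + δ := by rw [hwq]
      obtain ⟨vw, hvw⟩ := hFisurj w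
      have h1 := lemA vw u
      rw [hvw] at h1
      have e1 : hfun vw = ⟪vw, w⟫ - ‖w‖ ^ 2 / 2 - g w := by
        rw [hhfun]; simp only []; rw [hvw]
      have e2 : ⟪w, u - vw⟫ = ⟪w, u⟫ - ⟪w, vw⟫ := inner_sub_right _ _ _
      rw [e1, e2, real_inner_comm vw w] at h1
      have h2 : ⟪w, u⟫ - ‖w‖ ^ 2 / 2 - g w ≤ hfun u := by linarith
      have e3 : ⟪w, u⟫ = ⟪q, u⟫ + δ * ‖u‖ := by
        rw [hw, inner_add_left, real_inner_smul_left, real_inner_self_eq_norm_sq]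
        field_simp
      have hq2 : ‖w‖ ^ 2 ≤ (‖q‖ + δ) ^ 2 := by
        nlinarith [norm_nonneg w, hwnorm]
      rw [hc₁]
      linarith
  -- coercivity of B
  set K : ℝ := hfun (L i x₀) - ⟪q, L i x₀⟫ with hK
  have hcoerclb : ∀ x : H, ω i * (δ * Cc⁻¹ * ‖x‖ - c₁ - K) ≤ ⟪B x, x - x₀⟫ := by
    intro x
    have hsplit : ⟪B x, x - x₀⟫ = ω i * ⟪F i (L i x) - p i, L i (x - x₀)⟫
        + ∑ j ∈ Finset.univ.erase i, ω j * ⟪F j (L j x) - p j, L j (x - x₀)⟫ := by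
      rw [hBinner]
      exact (Finset.add_sum_erase _ _ (Finset.mem_univ i)).symm
    have hterm_erase : ∀ j ∈ Finset.univ.erase i,
        ω j * ⟪F j (L j x₀) - p j, L j (x - x₀)⟫
          ≤ ω j * ⟪F j (L j x) - p j, L j (x - x₀)⟫ := by
      intro j _
      apply mul_le_mul_of_nonneg_left _ (le_of_lt (hωpos j))
      have hdiff : ⟪F j (L j x) - p j, L j (x - x₀)⟫ - ⟪F j (L j x₀) - p j, L j (x - x₀)⟫
          = ⟪F j (L j x) - F j (L j x₀), L j x - L j x₀⟫ := by
        rw [← inner_sub_left, map_sub]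
        congr 1
        abel
      have := hFmono j (L j x) (L j x₀)
      linarith
    have hsum_erase : ∑ j ∈ Finset.univ.erase i, ω j * ⟪F j (L j x₀) - p j, L j (x - x₀)⟫
        = ⟪vvec, x - x₀⟫ := by
      rw [hvvec, sum_inner]
      refine (Finset.sum_congr rfl (fun j _ => ?_)).symm
      rw [real_inner_smul_left, ContinuousLinearMap.adjoint_inner_left]
    have hvvecv : ⟪vvec, x - x₀⟫ = -(ω i) * ⟪v, x - x₀⟫ := by
      have hsm : (-(ω i)) • v = vvec := by
        rw [hv, smul_smul]
        rw [show -ω i * -(ω i)⁻¹ = ω i * (ω i)⁻¹ by ring,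
          mul_inv_cancel₀ (ne_of_gt (hωpos i)), one_smul]
      rw [← hsm, real_inner_smul_left]
    have hvwv : ⟪v, x - x₀⟫ = ⟪wv, L i (x - x₀)⟫ := by
      rw [← hwv, ContinuousLinearMap.adjoint_inner_left]
    have hterm_i : (hfun (L i x) - ⟪q, L i x⟫) - (hfun (L i x₀) - ⟪q, L i x₀⟫)
        + ⟪wv, L i (x - x₀)⟫ ≤ ⟪F i (L i x) - p i, L i (x - x₀)⟫ := by
      have hA := lemA (L i x) (L i x₀)
      have e0 : ⟪F i (L i x), L i x₀ - L i x⟫ = -⟪F i (L i x), L i x - L i x₀⟫ := by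
        rw [show L i x₀ - L i x = -(L i x - L i x₀) from by abel, inner_neg_right]
      rw [e0] at hA
      have e1 : ⟪F i (L i x) - p i, L i (x - x₀)⟫
          = ⟪F i (L i x), L i x - L i x₀⟫ - ⟪p i, L i x - L i x₀⟫ := by
        rw [map_sub, inner_sub_left]
      have e2 : ⟪q, L i x⟫ = ⟪p i, L i x⟫ + ⟪wv, L i x⟫ := by
        rw [hq, inner_add_left]
      have e3 : ⟪q, L i x₀⟫ = ⟪p i, L i x₀⟫ + ⟪wv, L i x₀⟫ := by
        rw [hq, inner_add_left]
      have e4 : ⟪wv, L i (x - x₀)⟫ = ⟪wv, L i x⟫ - ⟪wv, L i x₀⟫ := by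
        rw [map_sub, inner_sub_right]
      have e5 : ⟪p i, L i x - L i x₀⟫ = ⟪p i, L i x⟫ - ⟪p i, L i x₀⟫ :=
        inner_sub_right _ _ _
      rw [e1, e2, e3, e4, e5]
      linarith
    have hgrowth := growth (L i x)
    have hαx := hα x
    have hωi := hωpos i
    have hmul : ω i * ((hfun (L i x) - ⟪q, L i x⟫) - K)
        ≤ ω i * ⟪F i (L i x) - p i, L i (x - x₀)⟫ + (-(ω i)) * ⟪wv, L i (x - x₀)⟫ := by
      have := mul_le_mul_of_nonneg_left hterm_i (le_of_lt hωi)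
      rw [hK]
      nlinarith
    have hsum_ge : ⟪vvec, x - x₀⟫
        ≤ ∑ j ∈ Finset.univ.erase i, ω j * ⟪F j (L j x) - p j, L j (x - x₀)⟫ := by
      rw [← hsum_erase]
      exact Finset.sum_le_sum hterm_erase
    have hfinal1 : ω i * ((hfun (L i x) - ⟪q, L i x⟫) - K) ≤ ⟪B x, x - x₀⟫ := by
      rw [hsplit]
      have := hvvecv
      rw [hvwv] at this
      linarith
    have hstep : δ * Cc⁻¹ * ‖x‖ - c₁ ≤ hfun (L i x) - ⟪q, L i x⟫ := by
      have h1 : δ * Cc⁻¹ * ‖x‖ ≤ δ * ‖L i x‖ := by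
        have h2 := mul_le_mul_of_nonneg_left hαx (le_of_lt hδpos)
        calc δ * Cc⁻¹ * ‖x‖ = δ * (Cc⁻¹ * ‖x‖) := by ring
          _ ≤ δ * ‖L i x‖ := h2
      exact le_trans (by linarith) hgrowth
    calc ω i * (δ * Cc⁻¹ * ‖x‖ - c₁ - K)
        ≤ ω i * ((hfun (L i x) - ⟪q, L i x⟫) - K) := by
          apply mul_le_mul_of_nonneg_left _ (le_of_lt (hωpos i))
          linarith
      _ ≤ ⟪B x, x - x₀⟫ := hfinal1
  set ρ : ℝ := max ((c₁ + K + 1) / (δ * Cc⁻¹)) (‖x₀‖ + 1) with hρ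
  have hρx₀ : ‖x₀‖ + 1 ≤ ρ := le_max_right _ _
  have hδC : 0 < δ * Cc⁻¹ := by positivity
  have hcoerc : ∀ x : H, ρ ≤ ‖x‖ → 0 ≤ ⟪B x, x - x₀⟫ := by
    intro x hx
    have h1 : (c₁ + K + 1) / (δ * Cc⁻¹) ≤ ‖x‖ := le_trans (le_max_left _ _) hx
    have h2 : c₁ + K + 1 ≤ δ * Cc⁻¹ * ‖x‖ := by
      rwa [div_le_iff₀ hδC, mul_comm] at h1
    have h3 := hcoerclb x
    nlinarith [hωpos i]
  -- the sequence is bounded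
  have hρpos : 0 < ρ := lt_of_lt_of_le (by positivity) hρx₀
  have hbound : ∀ n, ‖xs n‖ ≤ ρ := by
    intro n
    by_contra hcon
    push_neg at hcon
    have hVI := hxsVI n x₀ hx₀C
    have hc := hcoerc (xs n) (le_of_lt hcon)
    have e1 : ⟪B (xs n), x₀ - xs n⟫ = -⟪B (xs n), xs n - x₀⟫ := by
      rw [show x₀ - xs n = -(xs n - x₀) from by abel, inner_neg_right]
    have e2 : ⟪xs n, x₀ - xs n⟫ = ⟪xs n, x₀⟫ - ‖xs n‖ ^ 2 := by
      rw [inner_sub_right, real_inner_self_eq_norm_sq]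
    have e3 : ⟪xs n, x₀⟫ ≤ ‖xs n‖ * ‖x₀‖ := real_inner_le_norm _ _
    have hεpos : 0 < 1 / ((n : ℝ) + 1) := by positivity
    have hx0ρ : ‖x₀‖ + 1 ≤ ρ := hρx₀
    rw [e1, e2] at hVI
    have hx0n : ‖x₀‖ < ‖xs n‖ := by linarith
    have hnpos : 0 < ‖xs n‖ := by linarith [norm_nonneg x₀]
    have hneg : ⟪xs n, x₀⟫ - ‖xs n‖ ^ 2 < 0 := by nlinarith
    have hprod : 1 / ((n : ℝ) + 1) * (⟪xs n, x₀⟫ - ‖xs n‖ ^ 2) < 0 :=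
      mul_neg_of_pos_of_neg hεpos hneg
    linarith
  -- the key comparison inequality
  have key : ∀ m n : ℕ, n ≤ m → ‖xs m - xs n‖ ^ 2 ≤ ‖xs m‖ ^ 2 - ‖xs n‖ ^ 2 := by
    intro m n hnm
    rcases eq_or_lt_of_le hnm with rfl | hlt
    · simp
    set en : ℝ := 1 / ((n : ℝ) + 1) with hen
    set em : ℝ := 1 / ((m : ℝ) + 1) with hem
    have henpos : 0 < en := by positivity
    have hempos : 0 < em := by positivity
    have hemen : em < en := by
      rw [hen, hem]
      apply div_lt_div_of_pos_left one_pos (by positivity)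
      have : (n : ℝ) < (m : ℝ) := by exact_mod_cast hlt
      linarith
    set d : H := xs m - xs n with hd
    set a : ℝ := ⟪xs n, d⟫ with ha
    set b : ℝ := ⟪xs m, d⟫ with hb
    have hba : b = a + ‖d‖ ^ 2 := by
      have h1 : b - a = ⟪d, d⟫ := by rw [hb, ha, ← inner_sub_left]
      rw [real_inner_self_eq_norm_sq] at h1
      linarith
    have hS : 0 ≤ en * a - em * b := by
      have h1 := hxsVI n (xs m) (hxsC m)
      have h2 := hxsVI m (xs n) (hxsC n)
      have hmn := hBmono (xs n) (xs m)
      have e1 : ⟪B (xs n), xs m - xs n⟫ = -⟪B (xs n), xs n - xs m⟫ := by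
        rw [show xs m - xs n = -(xs n - xs m) from by abel, inner_neg_right]
      have e2 : ⟪B (xs m), xs n - xs m⟫ = ⟪B (xs m), xs n - xs m⟫ := rfl
      have e3 : ⟪B (xs n) - B (xs m), xs n - xs m⟫
          = ⟪B (xs n), xs n - xs m⟫ - ⟪B (xs m), xs n - xs m⟫ := inner_sub_left _ _ _
      have e4 : ⟪xs n, xs m - xs n⟫ = a := rfl
      have e5 : ⟪xs m, xs n - xs m⟫ = -b := by
        rw [show xs n - xs m = -d from by rw [hd]; abel, inner_neg_right]
      rw [e1, e4] at h1
      rw [e5] at h2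
      rw [e3] at hmn
      linarith
    have hauxa : 0 ≤ a := by
      by_contra hcon
      push_neg at hcon
      nlinarith [sq_nonneg ‖d‖]
    have hauxb : 0 ≤ b := by nlinarith [sq_nonneg ‖d‖]
    have hd2b : ‖d‖ ^ 2 ≤ b := by nlinarith
    have hfin : b ≤ ‖xs m‖ ^ 2 - ‖xs n‖ ^ 2 := by
      have h1 : ⟪xs m, d⟫ = ⟪xs m, xs m⟫ - ⟪xs m, xs n⟫ := by
        rw [hd, inner_sub_right]
      have h2 : ⟪xs m, xs n⟫ - ⟪xs n, xs n⟫ = ⟪d, xs n⟫ := by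
        rw [hd, ← inner_sub_left]
      have h3 : ⟪d, xs n⟫ = a := real_inner_comm _ _
      have h4 : ⟪xs m, xs m⟫ = ‖xs m‖ ^ 2 := real_inner_self_eq_norm_sq _
      have h5 : ⟪xs n, xs n⟫ = ‖xs n‖ ^ 2 := real_inner_self_eq_norm_sq _
      rw [← hb] at h1
      linarith
    linarith
  -- the sequence of squared norms converges, hence the sequence is Cauchy
  set aseq : ℕ → ℝ := fun n => ‖xs n‖ ^ 2 with haseq
  have hamono : Monotone aseq := by
    intro n m hnm
    have := key m n hnm
    have := sq_nonneg ‖xs m - xs n‖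
    simp only [haseq]
    linarith
  have habdd : BddAbove (Set.range aseq) := by
    refine ⟨ρ ^ 2, ?_⟩
    rintro _ ⟨n, rfl⟩
    simp only [haseq]
    have := hbound n
    nlinarith [norm_nonneg (xs n)]
  have haconv : ∃ lA : ℝ, Filter.Tendsto aseq Filter.atTop (nhds lA) :=
    ⟨_, tendsto_atTop_ciSup hamono habdd⟩
  obtain ⟨lA, hlA⟩ := haconv
  have hacauchy : CauchySeq aseq := hlA.cauchySeq
  have hxcauchy : CauchySeq xs := by
    rw [Metric.cauchySeq_iff]
    intro ε hε
    obtain ⟨N, hN⟩ := Metric.cauchySeq_iff.1 hacauchy (ε ^ 2) (by positivity)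
    refine ⟨N, fun m hm n hn => ?_⟩
    have hsym : ∀ m' n', N ≤ m' → N ≤ n' → n' ≤ m' → dist (xs m') (xs n') < ε := by
      intro m' n' hm' hn' hle
      have h1 := hN m' hm' n' hn'
      rw [Real.dist_eq] at h1
      have h2 := key m' n' hle
      have h3 : aseq m' - aseq n' ≤ |aseq m' - aseq n'| := le_abs_self _
      rw [dist_eq_norm]
      have h4 : ‖xs m' - xs n'‖ ^ 2 < ε ^ 2 := by
        simp only [haseq] at h2 h3 h1
        linarith
      nlinarith [norm_nonneg (xs m' - xs n')]
    rcases le_total n m with hle | hle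
    · exact hsym m n hm hn hle
    · rw [dist_comm]
      exact hsym n m hn hm hle
  obtain ⟨xl, hxl⟩ := cauchySeq_tendsto_of_complete hxcauchy
  have hxlC : xl ∈ C := hCcl.mem_of_tendsto hxl (Filter.Eventually.of_forall hxsC)
  -- pass to the limit in the variational inequalities
  refine ⟨xl, hxlC, fun y hy => ?_⟩
  rw [ge_iff_le, hgoal xl y]
  have htendnorm : Filter.Tendsto (fun n => ‖xs n - xl‖) Filter.atTop (nhds 0) :=
    tendsto_iff_norm_sub_tendsto_zero.1 hxl
  have htendB : Filter.Tendsto (fun n => B (xs n)) Filter.atTop (nhds (B xl)) := by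
    rw [tendsto_iff_norm_sub_tendsto_zero]
    have hb1 : ∀ n, ‖B (xs n) - B xl‖ ≤ κ * ‖xs n - xl‖ := fun n => hBlip _ _
    have hb2 : Filter.Tendsto (fun n => κ * ‖xs n - xl‖) Filter.atTop (nhds 0) := by
      have := htendnorm.const_mul κ
      rwa [mul_zero] at this
    exact squeeze_zero (fun n => norm_nonneg _) hb1 hb2
  have hinner1 : Filter.Tendsto (fun n => ⟪B (xs n), y - xs n⟫) Filter.atTop
      (nhds ⟪B xl, y - xl⟫) :=
    htendB.inner (tendsto_const_nhds.sub hxl)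
  have hinner2 : Filter.Tendsto (fun n => ⟪xs n, y - xs n⟫) Filter.atTop
      (nhds ⟪xl, y - xl⟫) :=
    hxl.inner (tendsto_const_nhds.sub hxl)
  have hone : Filter.Tendsto (fun n : ℕ => 1 / ((n : ℝ) + 1)) Filter.atTop (nhds 0) :=
    tendsto_one_div_add_atTop_nhds_zero_nat
  have hterm2 : Filter.Tendsto (fun n : ℕ => (1 / ((n : ℝ) + 1)) * ⟪xs n, y - xs n⟫)
      Filter.atTop (nhds 0) := by
    have := hone.mul hinner2
    rwa [zero_mul] at this
  have htotal : Filter.Tendsto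
      (fun n : ℕ => ⟪B (xs n), y - xs n⟫ + (1 / ((n : ℝ) + 1)) * ⟪xs n, y - xs n⟫)
      Filter.atTop (nhds (⟪B xl, y - xl⟫ + 0)) := hinner1.add hterm2
  rw [add_zero] at htotal
  exact ge_of_tendsto htotal (Filter.Eventually.of_forall (fun n => hxsVI n y hy))
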